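/- arXiv:math/0701102 — 4 statements merged into one kernel-verified Lean document; each statement's English description precedes it below -/
import Mathlib

section
/- Let V be an n × N matrix of 2k-wise independent uniform ±1 entries and Ṽ an n × N matrix of i.i.d. standard Gaussians. Then E[Tr((V Vᵀ)^k)] ≤ E[Tr((Ṽ Ṽᵀ)^k)]. -/
open Matrix MeasureTheory ProbabilityTheory Real
open scoped NNReal ENNReal

/-- A family of real random variables is `k`-wise independent if every subfamily
of at most `k` of them is (mutually) independent. -/
def KWiseIndep {Ω : Type*} [MeasurableSpace Ω] {ι : Type*} (k : ℕ)
    (X : ι → Ω → ℝ) (μ : Measure Ω) : Prop :=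
  ∀ s : Finset ι, s.card ≤ k →
    iIndepFun (fun i : s => X i) μ

set_option linter.unusedSectionVars false


lemma aux_gamma_lb (l : ℕ) : Real.sqrt π / 2 ^ l ≤ Real.Gamma ((l : ℝ) + 1/2) := by
  induction l with
  | zero => norm_num [Real.Gamma_one_half_eq]
  | succ l ih =>
    have h0 : (0:ℝ) < (l:ℝ) + 1/2 := by positivity
    have hstep : Real.Gamma (((l+1 : ℕ) : ℝ) + 1/2)
        = ((l:ℝ) + 1/2) * Real.Gamma ((l:ℝ) + 1/2) := by
      push_cast
      rw [show (l:ℝ) + 1 + 1/2 = ((l:ℝ) + 1/2) + 1 by ring, Real.Gamma_add_one (ne_of_gt h0)]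
    rw [hstep]
    have hg : 0 < Real.Gamma ((l:ℝ)+1/2) := Real.Gamma_pos_of_pos h0
    have h2 : (0:ℝ) < 2 ^ l := by positivity
    calc Real.sqrt π / 2 ^ (l+1) = (1/2) * (Real.sqrt π / 2^l) := by ring
      _ ≤ ((l:ℝ)+1/2) * Real.Gamma ((l:ℝ)+1/2) := by
          apply mul_le_mul (by linarith) ih (by positivity) (by linarith)

lemma gaussianPDFReal_zero_one (x : ℝ) :
    gaussianPDFReal 0 1 x = (Real.sqrt (2 * π))⁻¹ * Real.exp (-(1/2) * x ^ 2) := by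
  simp only [gaussianPDFReal, NNReal.coe_one, mul_one, sub_zero]
  ring_nf

lemma integral_gaussianReal_eq (f : ℝ → ℝ) :
    ∫ x, f x ∂(gaussianReal 0 1) = ∫ x, gaussianPDFReal 0 1 x * f x := by
  rw [gaussianReal_of_var_ne_zero 0 one_ne_zero]
  have h : (gaussianPDF 0 1) = fun x => ((Real.toNNReal (gaussianPDFReal 0 1 x) : ℝ≥0) : ℝ≥0∞) :=
    rfl
  rw [h, integral_withDensity_eq_integral_smul ((measurable_gaussianPDFReal 0 1).real_toNNReal) f]
  congr 1; funext x
  simp [NNReal.smul_def, Real.coe_toNNReal _ (gaussianPDFReal_nonneg 0 1 x)]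

lemma integrable_gaussianReal_iff (f : ℝ → ℝ) :
    Integrable f (gaussianReal 0 1) ↔
      Integrable (fun x => gaussianPDFReal 0 1 x * f x) := by
  rw [gaussianReal_of_var_ne_zero 0 one_ne_zero]
  have h : (gaussianPDF 0 1) = fun x => ((Real.toNNReal (gaussianPDFReal 0 1 x) : ℝ≥0) : ℝ≥0∞) :=
    rfl
  rw [h, integrable_withDensity_iff_integrable_smul
    ((measurable_gaussianPDFReal 0 1).real_toNNReal)]
  constructor <;> intro hh <;> refine hh.congr (Filter.Eventually.of_forall fun x => ?_) <;>
    simp [NNReal.smul_def, Real.coe_toNNReal _ (gaussianPDFReal_nonneg 0 1 x)]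

lemma integrable_npow_gaussian (m : ℕ) : Integrable (fun x : ℝ => x ^ m) (gaussianReal 0 1) := by
  rw [integrable_gaussianReal_iff]
  have h : Integrable (fun x : ℝ => x ^ (m:ℝ) * Real.exp (-(1/2) * x ^ 2)) := by
    apply integrable_rpow_mul_exp_neg_mul_sq (by norm_num)
    exact lt_of_lt_of_le neg_one_lt_zero (Nat.cast_nonneg m)
  simp_rw [Real.rpow_natCast] at h
  refine ((h.const_mul ((Real.sqrt (2 * π))⁻¹)).congr
    (Filter.Eventually.of_forall fun x => ?_))
  simp only [gaussianPDFReal_zero_one]; ring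

lemma one_le_even_moment (l : ℕ) : (1:ℝ) ≤ ∫ x, x ^ (2*l) ∂(gaussianReal 0 1) := by
  have hsπ : 0 < Real.sqrt π := Real.sqrt_pos.mpr Real.pi_pos
  have hs2 : 0 < Real.sqrt 2 := Real.sqrt_pos.mpr (by norm_num)
  have h2l : 0 < (2:ℝ)^l := by positivity
  rw [integral_gaussianReal_eq]
  have habs : ∀ x : ℝ, gaussianPDFReal 0 1 x * x ^ (2*l)
      = (fun y : ℝ => gaussianPDFReal 0 1 y * y ^ (2*l)) |x| := by
    intro x
    simp only [gaussianPDFReal_zero_one]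
    simp [pow_mul, sq_abs]
  have hIoi : ∫ y in Set.Ioi (0:ℝ), gaussianPDFReal 0 1 y * y ^ (2*l)
      = (2:ℝ)^l / (2 * Real.sqrt π) * Real.Gamma ((l:ℝ) + 1/2) := by
    have h1 : ∀ y : ℝ, gaussianPDFReal 0 1 y * y ^ (2*l)
        = (Real.sqrt (2 * π))⁻¹ * (y ^ (((2*l : ℕ):ℝ)) * Real.exp (-(1/2) * y ^ (2:ℝ))) := by
      intro y
      rw [gaussianPDFReal_zero_one, Real.rpow_natCast, Real.rpow_two]
      ring
    simp_rw [h1]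
    rw [integral_const_mul]
    rw [integral_rpow_mul_exp_neg_mul_rpow (p := 2) (q := ((2*l : ℕ):ℝ)) (b := 1/2)
      (by norm_num) (lt_of_lt_of_le neg_one_lt_zero (Nat.cast_nonneg _)) (by norm_num)]
    have hargs : (((2*l : ℕ):ℝ) + 1)/2 = (l:ℝ) + 1/2 := by push_cast; ring
    have hC : (1/2:ℝ) ^ (-(((2*l : ℕ) : ℝ) + 1)/2) = (2:ℝ) ^ l * Real.sqrt 2 := by
      rw [show (-(((2*l : ℕ) : ℝ) + 1)/2) = -((l:ℝ)+1/2) by push_cast; ring,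
        show (1/2:ℝ) = 2⁻¹ by norm_num,
        Real.inv_rpow (by norm_num), Real.rpow_neg (by norm_num), inv_inv,
        Real.rpow_add (by norm_num), Real.rpow_natCast]
      norm_num [Real.sqrt_eq_rpow]
    rw [hargs, hC, Real.sqrt_mul (by norm_num : (0:ℝ) ≤ 2) π]
    have h2ne : Real.sqrt 2 ≠ 0 := ne_of_gt hs2
    have hπne : Real.sqrt π ≠ 0 := ne_of_gt hsπ
    field_simp
  calc (1:ℝ) = 2 * ((2:ℝ)^l / (2 * Real.sqrt π) * (Real.sqrt π / 2^l)) := by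
        field_simp
    _ ≤ 2 * ((2:ℝ)^l / (2 * Real.sqrt π) * Real.Gamma ((l:ℝ) + 1/2)) := by
        have := aux_gamma_lb l
        gcongr
    _ = 2 * ∫ y in Set.Ioi (0:ℝ), gaussianPDFReal 0 1 y * y ^ (2*l) := by rw [hIoi]
    _ = ∫ x, (fun y : ℝ => gaussianPDFReal 0 1 y * y ^ (2*l)) |x| := (integral_comp_abs).symm
    _ = ∫ x, gaussianPDFReal 0 1 x * x ^ (2*l) := by
        congr 1; funext x; rw [← habs x]

lemma odd_moment_zero {m : ℕ} (hm : Odd m) : ∫ x, x ^ m ∂(gaussianReal 0 1) = 0 := by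
  have hmap : (gaussianReal 0 1).map (fun x => (-1 : ℝ) * x) = gaussianReal 0 1 := by
    rw [show (fun x => (-1:ℝ) * x) = (((-1:ℝ)) * ·) from rfl, gaussianReal_map_const_mul (-1)]
    norm_num
  have h1 : ∫ x, x ^ m ∂(gaussianReal 0 1) = ∫ x, ((-1:ℝ) * x) ^ m ∂(gaussianReal 0 1) := by
    conv_lhs => rw [← hmap]
    rw [integral_map (by fun_prop) (by fun_prop)]
  have h2 : ∫ x, ((-1:ℝ) * x) ^ m ∂(gaussianReal 0 1) = - ∫ x, x ^ m ∂(gaussianReal 0 1) := by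
    simp_rw [neg_one_mul, hm.neg_pow]
    exact integral_neg _
  linarith [h1, h2]

lemma integral_prod_of_indep {Ω ι : Type*} [MeasurableSpace Ω] {μ : Measure Ω}
    [IsProbabilityMeasure μ] (f : ι → Ω → ℝ)
    (hindep : iIndepFun f μ)
    (hmeas : ∀ i, Measurable (f i)) (hint : ∀ i, Integrable (f i) μ) (s : Finset ι) :
    Integrable (fun ω => ∏ i ∈ s, f i ω) μ ∧
      ∫ ω, ∏ i ∈ s, f i ω ∂μ = ∏ i ∈ s, ∫ ω, f i ω ∂μ := by
  classical
  induction s using Finset.induction_on with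
  | empty => simp
  | @insert i s hi ih =>
    have hprodfun : (∏ j ∈ s, f j) = fun ω => ∏ j ∈ s, f j ω := by
      funext ω; exact Finset.prod_apply ω s f
    have hprod : IndepFun (f i) (fun ω => ∏ j ∈ s, f j ω) μ := by
      have h := hindep.indepFun_finsetProd_of_notMem hmeas hi
      rw [hprodfun] at h
      exact h.symm
    have hint2 : Integrable (fun ω => f i ω * ∏ j ∈ s, f j ω) μ :=
      hprod.integrable_mul (hint i) ih.1
    constructor
    · refine hint2.congr (Filter.Eventually.of_forall fun ω => ?_)
      simp [Finset.prod_insert hi]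
    · rw [Finset.prod_insert hi]
      have hval := hprod.integral_mul_eq_mul_integral (hint i).1 ih.1.1
      calc ∫ ω, ∏ j ∈ insert i s, f j ω ∂μ
          = ∫ ω, f i ω * ∏ j ∈ s, f j ω ∂μ := by
            congr 1; funext ω; rw [Finset.prod_insert hi]
        _ = (∫ ω, f i ω ∂μ) * ∫ ω, ∏ j ∈ s, f j ω ∂μ := hval
        _ = (∫ ω, f i ω ∂μ) * ∏ j ∈ s, ∫ ω, f j ω ∂μ := by rw [ih.2]

section SignFacts
variable {Ω : Type*} [MeasurableSpace Ω] {μ : Measure Ω} [IsProbabilityMeasure μ]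

lemma sign_pow_eq {X : Ω → ℝ} (hX : ∀ ω, X ω = 1 ∨ X ω = -1) (c : ℕ) (ω : Ω) :
    X ω ^ c = if Even c then 1 else X ω := by
  rcases hX ω with h | h <;> rw [h] <;> by_cases hc : Even c
  · simp [hc]
  · simp [hc]
  · simp [hc.neg_one_pow, hc]
  · simp [(Nat.not_even_iff_odd.mp hc).neg_one_pow, hc]

lemma sign_integral_zero {X : Ω → ℝ} (hXm : Measurable X)
    (hX : ∀ ω, X ω = 1 ∨ X ω = -1) (hX1 : μ {ω | X ω = 1} = 1/2) :
    ∫ ω, X ω ∂μ = 0 := by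
  have hA : MeasurableSet {ω | X ω = 1} := hXm (measurableSet_singleton 1)
  have hrep : X = fun ω => Set.indicator {ω | X ω = 1} (fun _ => (2:ℝ)) ω - 1 := by
    funext ω
    rcases hX ω with h | h
    · rw [h, Set.indicator_of_mem (by simpa [Set.mem_setOf_eq] using h)]; norm_num
    · rw [h, Set.indicator_of_notMem (by simp [Set.mem_setOf_eq, h]; norm_num)]; norm_num
  rw [hrep]
  rw [integral_sub ((integrable_const (2:ℝ)).indicator hA) (integrable_const 1)]
  rw [integral_indicator_const _ hA, integral_const]
  simp only [measureReal_def]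
  rw [hX1, measure_univ]
  simp [ENNReal.toReal_div]

lemma sign_pow_integral {X : Ω → ℝ} (hXm : Measurable X)
    (hX : ∀ ω, X ω = 1 ∨ X ω = -1) (hX1 : μ {ω | X ω = 1} = 1/2) (c : ℕ) :
    ∫ ω, X ω ^ c ∂μ = if Even c then 1 else 0 := by
  simp_rw [sign_pow_eq hX c]
  by_cases hc : Even c
  · simp [hc]
  · simp only [hc, if_false]
    exact sign_integral_zero hXm hX hX1
end SignFacts

lemma pow_apply_path {n : ℕ} (M : Matrix (Fin n) (Fin n) ℝ) :
    ∀ (m : ℕ) (i j : Fin n),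
      (M ^ (m+1)) i j
        = ∑ f : Fin m → Fin n, ∏ t : Fin (m+1), M ((Fin.cons i f : Fin (m+1) → Fin n) t) ((Fin.snoc f j : Fin (m+1) → Fin n) t)
  | 0, i, j => by
    rw [pow_one]
    have h1 : ∀ f : Fin 0 → Fin n, ∏ t : Fin 1,
        M ((Fin.cons i f : Fin 1 → Fin n) t) ((Fin.snoc f j : Fin 1 → Fin n) t) = M i j := by
      intro f
      rw [Fin.prod_univ_one]
      simp [Fin.snoc]
    simp only [h1]
    simp [Fin.snoc]
  | (m+1), i, j => by
    rw [pow_succ', Matrix.mul_apply]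
    simp_rw [pow_apply_path M m]
    rw [show (∑ g : Fin (m+1) → Fin n, ∏ t : Fin (m+2),
          M ((Fin.cons i g : Fin (m+2) → Fin n) t) ((Fin.snoc g j : Fin (m+2) → Fin n) t))
        = ∑ p : Fin n × (Fin m → Fin n), ∏ t : Fin (m+2),
            M ((Fin.cons i ((Fin.consEquiv (fun _ => Fin n)) p) : Fin (m+2) → Fin n) t)
              ((Fin.snoc ((Fin.consEquiv (fun _ => Fin n)) p) j : Fin (m+2) → Fin n) t) from
      (Equiv.sum_comp (Fin.consEquiv (fun _ => Fin n)) _).symm]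
    rw [Fintype.sum_prod_type]
    refine Finset.sum_congr rfl fun a _ => ?_
    rw [Finset.mul_sum]
    refine Finset.sum_congr rfl fun f _ => ?_
    have hae : (Fin.consEquiv (fun _ => Fin n)) (a, f) = Fin.cons a f := rfl
    rw [hae]
    conv_rhs => rw [← Fin.cons_snoc_eq_snoc_cons, Fin.prod_univ_succ]
    simp [Fin.cons_succ]

lemma trace_expand {n N : ℕ} (m : ℕ) (X : Matrix (Fin n) (Fin N) ℝ) :
    ((X * Xᵀ) ^ (m+1)).trace =
      ∑ z : Fin n × (Fin m → Fin n) × (Fin (m+1) → Fin N),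
        ∏ q : Fin (m+1) × Bool,
          X ((if q.2 then (Fin.snoc z.2.1 z.1 : Fin (m+1) → Fin n)
              else (Fin.cons z.1 z.2.1 : Fin (m+1) → Fin n)) q.1) (z.2.2 q.1) := by
  rw [Matrix.trace]
  simp only [Matrix.diag]
  simp_rw [pow_apply_path (X * Xᵀ) m]
  rw [Fintype.sum_prod_type]
  refine Finset.sum_congr rfl fun i _ => ?_
  rw [Fintype.sum_prod_type]
  refine Finset.sum_congr rfl fun f _ => ?_
  -- expand matrix product entries and distribute the product over sums
  have hentry : ∀ t : Fin (m+1),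
      (X * Xᵀ) ((Fin.cons i f : Fin (m+1) → Fin n) t) ((Fin.snoc f i : Fin (m+1) → Fin n) t)
        = ∑ j : Fin N, X ((Fin.cons i f : Fin (m+1) → Fin n) t) j
            * X ((Fin.snoc f i : Fin (m+1) → Fin n) t) j := by
    intro t
    rw [Matrix.mul_apply]
    simp [Matrix.transpose_apply]
  simp_rw [hentry]
  rw [Finset.prod_univ_sum]
  rw [Fintype.piFinset_univ]
  refine Finset.sum_congr rfl fun g _ => ?_
  rw [Fintype.prod_prod_type]
  refine Finset.prod_congr rfl fun t _ => ?_
  rw [Fintype.prod_bool]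
  norm_num
  ring

lemma mono_compare
    {Ω Ω' : Type*} [MeasurableSpace Ω] [MeasurableSpace Ω']
    {μ : Measure Ω} [IsProbabilityMeasure μ] {μ' : Measure Ω'} [IsProbabilityMeasure μ']
    {n N k : ℕ}
    {V : Ω → Matrix (Fin n) (Fin N) ℝ}
    (hVmeas : ∀ i j, Measurable (fun ω => V ω i j))
    (hVsign : ∀ ω i j, V ω i j = 1 ∨ V ω i j = -1)
    (hVunif : ∀ i j, μ {ω | V ω i j = 1} = 1/2)
    (hVindep : KWiseIndep (2 * k) (fun (p : Fin n × Fin N) ω => V ω p.1 p.2) μ)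
    {W : Ω' → Matrix (Fin n) (Fin N) ℝ}
    (hWmeas : ∀ i j, Measurable (fun ω => W ω i j))
    (hWindep : iIndepFun
      (fun (p : Fin n × Fin N) ω => W ω p.1 p.2) μ')
    (hWgauss : ∀ i j, Measure.map (fun ω => W ω i j) μ' = gaussianReal 0 1)
    {ι : Type*} [Fintype ι] (hcard : Fintype.card ι ≤ 2*k)
    (E : ι → Fin n × Fin N) :
    Integrable (fun ω => ∏ t : ι, W ω (E t).1 (E t).2) μ' ∧
      ∫ ω, ∏ t : ι, V ω (E t).1 (E t).2 ∂μ ≤ ∫ ω, ∏ t : ι, W ω (E t).1 (E t).2 ∂μ' := by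
  classical
  set s : Finset (Fin n × Fin N) := Finset.univ.image E with hs
  set c : Fin n × Fin N → ℕ := fun p => (Finset.univ.filter (fun t => E t = p)).card with hc
  have hgroupV : ∀ ω : Ω, ∏ t : ι, V ω (E t).1 (E t).2 = ∏ p ∈ s, (V ω p.1 p.2) ^ c p :=
    fun ω => Finset.prod_comp (fun p : Fin n × Fin N => V ω p.1 p.2) E
  have hgroupW : ∀ ω : Ω', ∏ t : ι, W ω (E t).1 (E t).2 = ∏ p ∈ s, (W ω p.1 p.2) ^ c p :=
    fun ω => Finset.prod_comp (fun p : Fin n × Fin N => W ω p.1 p.2) E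
  -- W side
  have hWint_each : ∀ (p : Fin n × Fin N) (mm : ℕ),
      Integrable (fun ω => W ω p.1 p.2 ^ mm) μ' := by
    intro p mm
    have h := integrable_npow_gaussian mm
    rw [← hWgauss p.1 p.2,
      integrable_map_measure (by fun_prop) (hWmeas p.1 p.2).aemeasurable] at h
    exact h
  have hWmom : ∀ (p : Fin n × Fin N) (mm : ℕ),
      ∫ ω, W ω p.1 p.2 ^ mm ∂μ' = ∫ x, x ^ mm ∂(gaussianReal 0 1) := by
    intro p mm
    rw [← hWgauss p.1 p.2, integral_map (hWmeas p.1 p.2).aemeasurable (by fun_prop)]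
  have hWindep' : iIndepFun
      (fun p ω => W ω p.1 p.2 ^ c p) μ' :=
    hWindep.comp (fun p x => x ^ c p) (fun p => measurable_id.pow_const (c p))
  obtain ⟨hWint, hWval⟩ := integral_prod_of_indep _ hWindep'
    (fun p => (hWmeas p.1 p.2).pow_const (c p)) (fun p => hWint_each p (c p)) s
  -- V side
  have hcards : s.card ≤ 2*k :=
    le_trans Finset.card_image_le (by simpa using hcard)
  have hVind0 := hVindep s hcards
  have hVindep' : iIndepFun
      (fun (i : s) ω => V ω (i : Fin n × Fin N).1 (i : Fin n × Fin N).2 ^ c i) μ :=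
    hVind0.comp (fun i x => x ^ c (i : Fin n × Fin N))
      (fun i => measurable_id.pow_const _)
  obtain ⟨hVint, hVval⟩ := integral_prod_of_indep
    (fun (i : s) ω => V ω (i : Fin n × Fin N).1 (i : Fin n × Fin N).2 ^ c i) hVindep'
    (fun i => (hVmeas _ _).pow_const _)
    (fun i => by
      refine Integrable.mono' (integrable_const (1:ℝ))
        (((hVmeas _ _).pow_const _).aestronglyMeasurable)
        (Filter.Eventually.of_forall fun ω => ?_)
      rcases hVsign ω (i : Fin n × Fin N).1 (i : Fin n × Fin N).2 with h | h <;>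
        rw [Real.norm_eq_abs, abs_pow, h] <;> simp)
    Finset.univ
  constructor
  · refine hWint.congr (Filter.Eventually.of_forall fun ω => ?_)
    exact (hgroupW ω).symm
  calc ∫ ω, ∏ t : ι, V ω (E t).1 (E t).2 ∂μ
      = ∫ ω, ∏ i : s, V ω (i : Fin n × Fin N).1 (i : Fin n × Fin N).2 ^ c i ∂μ := by
        congr 1; funext ω
        exact (hgroupV ω).trans (Finset.prod_coe_sort s (fun p => V ω p.1 p.2 ^ c p)).symm
    _ = ∏ i : s, ∫ ω, V ω (i : Fin n × Fin N).1 (i : Fin n × Fin N).2 ^ c i ∂μ := hVval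
    _ = ∏ p ∈ s, ∫ ω, V ω p.1 p.2 ^ c p ∂μ :=
        Finset.prod_coe_sort s (fun p => ∫ ω, V ω p.1 p.2 ^ c p ∂μ)
    _ ≤ ∏ p ∈ s, ∫ ω, W ω p.1 p.2 ^ c p ∂μ' := by
        refine Finset.prod_le_prod (fun p _ => ?_) (fun p _ => ?_)
        · rw [sign_pow_integral (hVmeas p.1 p.2) (fun ω => hVsign ω p.1 p.2)
            (hVunif p.1 p.2) (c p)]
          positivity
        · rw [sign_pow_integral (hVmeas p.1 p.2) (fun ω => hVsign ω p.1 p.2)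
            (hVunif p.1 p.2) (c p), hWmom p (c p)]
          by_cases hcp : Even (c p)
          · rw [if_pos hcp]
            obtain ⟨l, hl⟩ := hcp
            rw [hl, show l + l = 2 * l from (two_mul l).symm]
            exact one_le_even_moment l
          · rw [if_neg hcp]
            rw [odd_moment_zero (Nat.not_even_iff_odd.mp hcp)]
    _ = ∫ ω, ∏ p ∈ s, W ω p.1 p.2 ^ c p ∂μ' := hWval.symm
    _ = ∫ ω, ∏ t : ι, W ω (E t).1 (E t).2 ∂μ' := by
        congr 1; funext ω
        exact (hgroupW ω).symm

/-- Let `V` be an `n × N` matrix of `2k`-wise independent uniform `±1` entries,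
and `W` an `n × N` matrix of i.i.d. standard Gaussians. Then
`E[Tr((V Vᵀ)^k)] ≤ E[Tr((W Wᵀ)^k)]`. -/
theorem expected_trace_sign_le_gaussian
    {Ω Ω' : Type*} [MeasurableSpace Ω] [MeasurableSpace Ω']
    (μ : Measure Ω) [IsProbabilityMeasure μ]
    (μ' : Measure Ω') [IsProbabilityMeasure μ']
    (n N k : ℕ) (hk : 1 ≤ k)
    (V : Ω → Matrix (Fin n) (Fin N) ℝ)
    (hVmeas : ∀ i j, Measurable (fun ω => V ω i j))
    (hVsign : ∀ ω i j, V ω i j = 1 ∨ V ω i j = -1)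
    (hVunif : ∀ i j, μ {ω | V ω i j = 1} = 1/2)
    (hVindep : KWiseIndep (2 * k) (fun (p : Fin n × Fin N) ω => V ω p.1 p.2) μ)
    (W : Ω' → Matrix (Fin n) (Fin N) ℝ)
    (hWmeas : ∀ i j, Measurable (fun ω => W ω i j))
    (hWindep : iIndepFun
      (fun (p : Fin n × Fin N) ω => W ω p.1 p.2) μ')
    (hWgauss : ∀ i j, Measure.map (fun ω => W ω i j) μ' = gaussianReal 0 1) :
    ∫ ω, ((V ω * (V ω)ᵀ) ^ k).trace ∂μ ≤
      ∫ ω, ((W ω * (W ω)ᵀ) ^ k).trace ∂μ' := by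
  classical
  obtain ⟨m, rfl⟩ : ∃ m, k = m + 1 := ⟨k - 1, (Nat.succ_pred_eq_of_pos hk).symm⟩
  have hcard : Fintype.card (Fin (m+1) × Bool) ≤ 2 * (m+1) := by
    simp [Fintype.card_prod]
    omega
  -- the path/index map for each trace summand
  set Em : (Fin n × (Fin m → Fin n) × (Fin (m+1) → Fin N)) →
      (Fin (m+1) × Bool) → Fin n × Fin N :=
    fun z q => ((if q.2 then (Fin.snoc z.2.1 z.1 : Fin (m+1) → Fin n)
        else (Fin.cons z.1 z.2.1 : Fin (m+1) → Fin n)) q.1, z.2.2 q.1) with hEm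
  have hkey := fun z => mono_compare hVmeas hVsign hVunif hVindep hWmeas hWindep hWgauss
    hcard (Em z)
  have hVints : ∀ z ∈ (Finset.univ : Finset (Fin n × (Fin m → Fin n) × (Fin (m+1) → Fin N))),
      Integrable (fun ω => ∏ q : Fin (m+1) × Bool, V ω (Em z q).1 (Em z q).2) μ := by
    intro z _
    refine Integrable.mono' (integrable_const (1:ℝ))
      (Finset.measurable_prod _ (fun q _ => hVmeas (Em z q).1 (Em z q).2)).aestronglyMeasurable
      (Filter.Eventually.of_forall fun ω => ?_)
    rw [Real.norm_eq_abs, Finset.abs_prod]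
    refine Finset.prod_le_one (fun q _ => abs_nonneg _) (fun q _ => ?_)
    rcases hVsign ω (Em z q).1 (Em z q).2 with h | h <;> rw [h] <;> simp
  have hWints : ∀ z ∈ (Finset.univ : Finset (Fin n × (Fin m → Fin n) × (Fin (m+1) → Fin N))),
      Integrable (fun ω => ∏ q : Fin (m+1) × Bool, W ω (Em z q).1 (Em z q).2) μ' :=
    fun z _ => (hkey z).1
  calc ∫ ω, ((V ω * (V ω)ᵀ) ^ (m+1)).trace ∂μ
      = ∫ ω, ∑ z : Fin n × (Fin m → Fin n) × (Fin (m+1) → Fin N),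
          ∏ q : Fin (m+1) × Bool, V ω (Em z q).1 (Em z q).2 ∂μ := by
        congr 1; funext ω; exact trace_expand m (V ω)
    _ = ∑ z : Fin n × (Fin m → Fin n) × (Fin (m+1) → Fin N),
          ∫ ω, ∏ q : Fin (m+1) × Bool, V ω (Em z q).1 (Em z q).2 ∂μ :=
        integral_finset_sum _ hVints
    _ ≤ ∑ z : Fin n × (Fin m → Fin n) × (Fin (m+1) → Fin N),
          ∫ ω, ∏ q : Fin (m+1) × Bool, W ω (Em z q).1 (Em z q).2 ∂μ' :=
        Finset.sum_le_sum (fun z _ => (hkey z).2)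
    _ = ∫ ω, ∑ z : Fin n × (Fin m → Fin n) × (Fin (m+1) → Fin N),
          ∏ q : Fin (m+1) × Bool, W ω (Em z q).1 (Em z q).2 ∂μ' :=
        (integral_finset_sum _ hWints).symm
    _ = ∫ ω, ((W ω * (W ω)ᵀ) ^ (m+1)).trace ∂μ' := by
        congr 1; funext ω; exact (trace_expand m (W ω)).symm
end

section
/- Let P be the transition matrix of the random walk on a d-regular graph G on vertex set 𝒱, with λ = max_{i≥2}|λ_i(P)| the second largest eigenvalue in absolute value. Let S, S' ⊆ 𝒱 and let Π, Π' be the diagonal projections onto coordinates in S, S' respectively. Then ‖Π' P Π‖ ≤ √(λ + (1-λ)|S|/|𝒱|) · √(λ + (1-λ)|S'|/|𝒱|), where ‖·‖ is the ℓ₂ operator norm. -/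
set_option maxHeartbeats 1000000


open Matrix

/-- The Euclidean (`ℓ₂`) norm of a vector in `ℝ^m`. -/
noncomputable def euclNorm {m : ℕ} (x : Fin m → ℝ) : ℝ :=
  Real.sqrt (∑ v, x v ^ 2)

/-- The `ℓ₂ → ℓ₂` operator norm of a real matrix. -/
noncomputable def matrixOpNorm {m m' : ℕ} (V : Matrix (Fin m) (Fin m') ℝ) : ℝ :=
  ‖LinearMap.toContinuousLinearMap (Matrix.toEuclideanLin V)‖

/-- The diagonal projection onto the coordinates in `S`. -/
def coordProj {m : ℕ} (S : Finset (Fin m)) : Matrix (Fin m) (Fin m) ℝ :=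
  Matrix.diagonal (fun v => if v ∈ S then 1 else 0)

/-- Cauchy–Schwarz for finite sums, in square-root form. -/
private lemma abs_sum_mul_le {m : ℕ} (f g : Fin m → ℝ) :
    |∑ v, f v * g v| ≤ Real.sqrt (∑ v, f v ^ 2) * Real.sqrt (∑ v, g v ^ 2) := by
  rw [← Real.sqrt_mul (by positivity), ← Real.sqrt_sq_eq_abs]
  exact Real.sqrt_le_sqrt (Finset.sum_mul_sq_le_sq_mul_sq _ _ _)

/-- Two-dimensional Cauchy–Schwarz. -/
private lemma cs_two (a b c d : ℝ) (hc : 0 ≤ c) (hd : 0 ≤ d) :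
    a * b + Real.sqrt c * Real.sqrt d ≤ Real.sqrt (a ^ 2 + c) * Real.sqrt (b ^ 2 + d) := by
  have hkey : a * b + Real.sqrt c * Real.sqrt d ≤ Real.sqrt ((a ^ 2 + c) * (b ^ 2 + d)) := by
    rcases le_or_gt (a * b + Real.sqrt c * Real.sqrt d) 0 with h | h
    · exact h.trans (Real.sqrt_nonneg _)
    · rw [show a * b + Real.sqrt c * Real.sqrt d
          = Real.sqrt ((a * b + Real.sqrt c * Real.sqrt d) ^ 2) from (Real.sqrt_sq h.le).symm]
      apply Real.sqrt_le_sqrt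
      have h1 := Real.sq_sqrt hc
      have h2 := Real.sq_sqrt hd
      nlinarith [sq_nonneg (a * Real.sqrt d - b * Real.sqrt c), Real.sqrt_nonneg c,
        Real.sqrt_nonneg d, mul_nonneg (Real.sqrt_nonneg c) (Real.sqrt_nonneg d)]
  rw [Real.sqrt_mul (by positivity)] at hkey
  exact hkey

private lemma truncation_facts {m : ℕ} (S : Finset (Fin m)) (x : Fin m → ℝ) :
    (∑ v, (if v ∈ S then x v else 0)) ^ 2 ≤ (S.card : ℝ) * ∑ v, x v ^ 2 ∧
      ∑ v, (if v ∈ S then x v else 0) ^ 2 ≤ ∑ v, x v ^ 2 := by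
  constructor
  · have h1 : (∑ v, (if v ∈ S then x v else 0)) = ∑ v ∈ S, x v := by
      rw [Finset.sum_ite_mem, Finset.univ_inter]
    rw [h1]
    calc (∑ v ∈ S, x v) ^ 2 ≤ (S.card : ℝ) * ∑ v ∈ S, x v ^ 2 := by
          exact sq_sum_le_card_mul_sum_sq
      _ ≤ (S.card : ℝ) * ∑ v, x v ^ 2 := by
          apply mul_le_mul_of_nonneg_left _ (Nat.cast_nonneg _)
          exact Finset.sum_le_sum_of_subset_of_nonneg (Finset.subset_univ S)
            (fun i _ _ => sq_nonneg _)
  · apply Finset.sum_le_sum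
    intro i _
    split
    · exact le_rfl
    · simpa using sq_nonneg _

/-- The key bilinear estimate. -/
private lemma key_estimate {m : ℕ} (hm : 0 < m) (P : Matrix (Fin m) (Fin m) ℝ) (lam : ℝ)
    (hsymm : P.IsSymm)
    (he : P.mulVec (fun _ => 1 / Real.sqrt m) = fun _ => 1 / Real.sqrt m)
    (hlam0 : 0 ≤ lam) (hlam1 : lam < 1)
    (hspec : ∀ x : Fin m → ℝ, (∑ v, x v) = 0 →
      euclNorm (P.mulVec x) ≤ lam * euclNorm x)
    (S S' : Finset (Fin m)) (x y u w : Fin m → ℝ)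
    (hu1 : (∑ v, u v) ^ 2 ≤ (S.card : ℝ) * ∑ v, x v ^ 2)
    (hu2 : ∑ v, u v ^ 2 ≤ ∑ v, x v ^ 2)
    (hw1 : (∑ v, w v) ^ 2 ≤ (S'.card : ℝ) * ∑ v, y v ^ 2)
    (hw2 : ∑ v, w v ^ 2 ≤ ∑ v, y v ^ 2) :
    |∑ v, w v * P.mulVec u v| ≤
      (Real.sqrt (lam + (1 - lam) * S.card / m) * euclNorm x) *
        (Real.sqrt (lam + (1 - lam) * S'.card / m) * euclNorm y) := by
  classical
  have hn0 : (0 : ℝ) < (m : ℝ) := by exact_mod_cast hm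
  set sm : ℝ := Real.sqrt m with hsmdef
  have hsm0 : 0 < sm := Real.sqrt_pos.mpr hn0
  have hmsm : (m : ℝ) = sm * sm := (Real.mul_self_sqrt hn0.le).symm
  set a : ℝ := (∑ v, u v) / sm with ha
  set b : ℝ := (∑ v, w v) / sm with hb
  set u' : Fin m → ℝ := fun v => u v - a / sm with hu'
  set w' : Fin m → ℝ := fun v => w v - b / sm with hw'
  have hsum_u : ∑ v, u v = a * sm := by rw [ha, div_mul_cancel₀ _ hsm0.ne']
  have hsum_w : ∑ v, w v = b * sm := by rw [hb, div_mul_cancel₀ _ hsm0.ne']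
  have hu'sum : ∑ v, u' v = 0 := by
    simp only [hu', Finset.sum_sub_distrib, Finset.sum_const, Finset.card_univ,
      Fintype.card_fin, nsmul_eq_mul, hsum_u]
    rw [hmsm]
    field_simp
    ring
  have hw'sum : ∑ v, w' v = 0 := by
    simp only [hw', Finset.sum_sub_distrib, Finset.sum_const, Finset.card_univ,
      Fintype.card_fin, nsmul_eq_mul, hsum_w]
    rw [hmsm]
    field_simp
    ring
  -- row sums of P are 1
  have hrow : ∀ k, ∑ v, P k v = 1 := by
    intro k
    have h := congrFun he k
    simp only [Matrix.mulVec, dotProduct] at h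
    rw [← Finset.sum_mul] at h
    have hsm' : sm ≠ 0 := hsm0.ne'
    field_simp at h
    exact h
  have hPsym : ∀ i j, P i j = P j i := by
    intro i j
    have := congrFun (congrFun hsymm j) i
    simpa [Matrix.transpose_apply] using this
  have hPu'sum : ∑ v, P.mulVec u' v = 0 := by
    simp only [Matrix.mulVec, dotProduct]
    rw [Finset.sum_comm]
    have : ∀ j, ∑ i, P i j * u' j = u' j := by
      intro j
      rw [← Finset.sum_mul]
      have hc : ∑ i, P i j = 1 := by
        rw [Finset.sum_congr rfl fun i _ => hPsym i j]
        exact hrow j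
      rw [hc, one_mul]
    rw [Finset.sum_congr rfl fun j _ => this j]
    exact hu'sum
  have hPu : P.mulVec u = fun v => a / sm + P.mulVec u' v := by
    have hud : u = (a • fun _ : Fin m => 1 / sm) + u' := by
      funext v
      simp only [hu', Pi.add_apply, Pi.smul_apply, smul_eq_mul]
      ring
    rw [hud, Matrix.mulVec_add, Matrix.mulVec_smul, he]
    funext v
    simp only [Pi.add_apply, Pi.smul_apply, smul_eq_mul]
    ring
  -- split the bilinear form
  have hsplit : ∑ v, w v * P.mulVec u v = a * b + ∑ v, w' v * P.mulVec u' v := by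
    have hcong : ∀ v, w v * P.mulVec u v
        = (b / sm) * (a / sm) + (b / sm) * P.mulVec u' v + (a / sm) * w' v
          + w' v * P.mulVec u' v := by
      intro v
      have h1 : w v = b / sm + w' v := by simp [hw']
      rw [congrFun hPu v, h1]
      ring
    rw [Finset.sum_congr rfl fun v _ => hcong v]
    simp only [Finset.sum_add_distrib, Finset.sum_const, Finset.card_univ, Fintype.card_fin,
      nsmul_eq_mul, ← Finset.mul_sum, hPu'sum, hw'sum, mul_zero, add_zero]
    rw [hmsm]
    field_simp
  -- Pythagoras
  have hpyth_u : ∑ v, u' v ^ 2 = (∑ v, u v ^ 2) - a ^ 2 := by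
    have hc : ∀ v, u' v ^ 2 = u v ^ 2 - 2 * (a / sm) * u v + (a / sm) ^ 2 := by
      intro v; simp only [hu']; ring
    rw [Finset.sum_congr rfl fun v _ => hc v]
    simp only [Finset.sum_add_distrib, Finset.sum_sub_distrib, Finset.sum_const,
      Finset.card_univ, Fintype.card_fin, nsmul_eq_mul, ← Finset.mul_sum, hsum_u]
    rw [hmsm]
    field_simp
    ring
  have hpyth_w : ∑ v, w' v ^ 2 = (∑ v, w v ^ 2) - b ^ 2 := by
    have hc : ∀ v, w' v ^ 2 = w v ^ 2 - 2 * (b / sm) * w v + (b / sm) ^ 2 := by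
      intro v; simp only [hw']; ring
    rw [Finset.sum_congr rfl fun v _ => hc v]
    simp only [Finset.sum_add_distrib, Finset.sum_sub_distrib, Finset.sum_const,
      Finset.card_univ, Fintype.card_fin, nsmul_eq_mul, ← Finset.mul_sum, hsum_w]
    rw [hmsm]
    field_simp
    ring
  set Qx : ℝ := ∑ v, x v ^ 2 with hQx
  set Qy : ℝ := ∑ v, y v ^ 2 with hQy
  have hQx0 : 0 ≤ Qx := Finset.sum_nonneg fun v _ => sq_nonneg _
  have hQy0 : 0 ≤ Qy := Finset.sum_nonneg fun v _ => sq_nonneg _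
  have ha2u : a ^ 2 ≤ ∑ v, u v ^ 2 := by
    have h0 : 0 ≤ ∑ v, u' v ^ 2 := Finset.sum_nonneg fun v _ => sq_nonneg _
    rw [hpyth_u] at h0; linarith
  have hb2w : b ^ 2 ≤ ∑ v, w v ^ 2 := by
    have h0 : 0 ≤ ∑ v, w' v ^ 2 := Finset.sum_nonneg fun v _ => sq_nonneg _
    rw [hpyth_w] at h0; linarith
  have ha2 : a ^ 2 ≤ (S.card : ℝ) / m * Qx := by
    have : a ^ 2 = (∑ v, u v) ^ 2 / (m : ℝ) := by
      rw [ha, div_pow, hmsm]; ring_nf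
    rw [this, div_mul_eq_mul_div]
    exact (div_le_div_iff_of_pos_right hn0).mpr hu1
  have hb2 : b ^ 2 ≤ (S'.card : ℝ) / m * Qy := by
    have : b ^ 2 = (∑ v, w v) ^ 2 / (m : ℝ) := by
      rw [hb, div_pow, hmsm]; ring_nf
    rw [this, div_mul_eq_mul_div]
    exact (div_le_div_iff_of_pos_right hn0).mpr hw1
  -- bound the orthogonal part
  have hT : |∑ v, w' v * P.mulVec u' v| ≤
      lam * (Real.sqrt (Qx - a ^ 2) * Real.sqrt (Qy - b ^ 2)) := by
    have hcs := abs_sum_mul_le w' (P.mulVec u')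
    have hsp := hspec u' hu'sum
    simp only [euclNorm] at hsp
    have h1 : Real.sqrt (∑ v, P.mulVec u' v ^ 2) ≤ lam * Real.sqrt (Qx - a ^ 2) := by
      refine hsp.trans ?_
      apply mul_le_mul_of_nonneg_left _ hlam0
      apply Real.sqrt_le_sqrt
      rw [hpyth_u]; linarith
    have h2 : Real.sqrt (∑ v, w' v ^ 2) ≤ Real.sqrt (Qy - b ^ 2) := by
      apply Real.sqrt_le_sqrt
      rw [hpyth_w]; linarith
    calc |∑ v, w' v * P.mulVec u' v|
        ≤ Real.sqrt (∑ v, w' v ^ 2) * Real.sqrt (∑ v, P.mulVec u' v ^ 2) := hcs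
      _ ≤ Real.sqrt (Qy - b ^ 2) * (lam * Real.sqrt (Qx - a ^ 2)) := by
          apply mul_le_mul h2 h1 (Real.sqrt_nonneg _) (Real.sqrt_nonneg _)
      _ = lam * (Real.sqrt (Qx - a ^ 2) * Real.sqrt (Qy - b ^ 2)) := by ring
  have hxa : 0 ≤ Qx - a ^ 2 := by linarith [ha2u.trans hu2]
  have hyb : 0 ≤ Qy - b ^ 2 := by linarith [hb2w.trans hw2]
  -- assemble
  have hmain : |∑ v, w v * P.mulVec u v| ≤
      Real.sqrt (a ^ 2 + lam * (Qx - a ^ 2)) * Real.sqrt (b ^ 2 + lam * (Qy - b ^ 2)) := by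
    rw [hsplit]
    calc |a * b + ∑ v, w' v * P.mulVec u' v|
        ≤ |a * b| + |∑ v, w' v * P.mulVec u' v| := abs_add_le _ _
      _ ≤ |a| * |b| + lam * (Real.sqrt (Qx - a ^ 2) * Real.sqrt (Qy - b ^ 2)) := by
          rw [abs_mul]; linarith [hT]
      _ = |a| * |b| + Real.sqrt (lam * (Qx - a ^ 2)) * Real.sqrt (lam * (Qy - b ^ 2)) := by
          rw [Real.sqrt_mul hlam0, Real.sqrt_mul hlam0]
          rw [show Real.sqrt lam * Real.sqrt (Qx - a^2) * (Real.sqrt lam * Real.sqrt (Qy - b^2))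
              = (Real.sqrt lam * Real.sqrt lam) * (Real.sqrt (Qx - a^2) * Real.sqrt (Qy - b^2))
              from by ring, Real.mul_self_sqrt hlam0]
      _ ≤ Real.sqrt (|a| ^ 2 + lam * (Qx - a ^ 2)) * Real.sqrt (|b| ^ 2 + lam * (Qy - b ^ 2)) :=
          cs_two |a| |b| _ _ (by positivity) (by positivity)
      _ = Real.sqrt (a ^ 2 + lam * (Qx - a ^ 2)) * Real.sqrt (b ^ 2 + lam * (Qy - b ^ 2)) := by
          rw [sq_abs, sq_abs]
  refine hmain.trans ?_
  have hfin_x : Real.sqrt (a ^ 2 + lam * (Qx - a ^ 2)) ≤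
      Real.sqrt (lam + (1 - lam) * S.card / m) * euclNorm x := by
    have hA0 : 0 ≤ lam + (1 - lam) * S.card / m := by
      have h1l : (0:ℝ) ≤ 1 - lam := by linarith
      have : (0:ℝ) ≤ (1 - lam) * S.card / m :=
        div_nonneg (mul_nonneg h1l (Nat.cast_nonneg _)) (Nat.cast_nonneg _)
      linarith
    rw [euclNorm, ← hQx, ← Real.sqrt_mul hA0]
    apply Real.sqrt_le_sqrt
    have h1 : (1 - lam) * a ^ 2 ≤ (1 - lam) * ((S.card : ℝ) / m * Qx) :=
      mul_le_mul_of_nonneg_left ha2 (by linarith)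
    have h2 : (lam + (1 - lam) * S.card / m) * Qx
        = lam * Qx + (1 - lam) * ((S.card : ℝ) / m * Qx) := by ring
    rw [h2]
    nlinarith [h1]
  have hfin_y : Real.sqrt (b ^ 2 + lam * (Qy - b ^ 2)) ≤
      Real.sqrt (lam + (1 - lam) * S'.card / m) * euclNorm y := by
    have hA0 : 0 ≤ lam + (1 - lam) * S'.card / m := by
      have h1l : (0:ℝ) ≤ 1 - lam := by linarith
      have : (0:ℝ) ≤ (1 - lam) * S'.card / m :=
        div_nonneg (mul_nonneg h1l (Nat.cast_nonneg _)) (Nat.cast_nonneg _)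
      linarith
    rw [euclNorm, ← hQy, ← Real.sqrt_mul hA0]
    apply Real.sqrt_le_sqrt
    have h1 : (1 - lam) * b ^ 2 ≤ (1 - lam) * ((S'.card : ℝ) / m * Qy) :=
      mul_le_mul_of_nonneg_left hb2 (by linarith)
    have h2 : (lam + (1 - lam) * S'.card / m) * Qy
        = lam * Qy + (1 - lam) * ((S'.card : ℝ) / m * Qy) := by ring
    rw [h2]
    nlinarith [h1]
  exact mul_le_mul hfin_x hfin_y (Real.sqrt_nonneg _)
    (mul_nonneg (Real.sqrt_nonneg _) (Real.sqrt_nonneg _))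

/-- Let `P` be the transition matrix of the random walk on a regular graph on
`m` vertices: `P` is symmetric with nonnegative entries, has eigenvalue `1` on
the uniform vector `e = (1,…,1)/√m`, and all eigenvalues on `e^⊥` are at most
`λ < 1` in absolute value. For subsets `S, S'` of the vertex set, with `Π, Π'`
the corresponding coordinate projections,
`‖Π' P Π‖ ≤ √(λ + (1-λ)|S|/m) · √(λ + (1-λ)|S'|/m)`. -/
theorem proj_walk_proj_opNorm_le
    {m : ℕ} (hm : 0 < m) (P : Matrix (Fin m) (Fin m) ℝ) (lam : ℝ)
    (hsymm : P.IsSymm) (hnonneg : ∀ u v, 0 ≤ P u v)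
    (he : P.mulVec (fun _ => 1 / Real.sqrt m) = fun _ => 1 / Real.sqrt m)
    (hlam0 : 0 ≤ lam) (hlam1 : lam < 1)
    (hspec : ∀ x : Fin m → ℝ, (∑ v, x v) = 0 →
      euclNorm (P.mulVec x) ≤ lam * euclNorm x)
    (S S' : Finset (Fin m)) :
    matrixOpNorm (coordProj S' * P * coordProj S) ≤
      Real.sqrt (lam + (1 - lam) * S.card / m) *
        Real.sqrt (lam + (1 - lam) * S'.card / m) := by
  classical
  set C1 : ℝ := Real.sqrt (lam + (1 - lam) * S.card / m) with hC1def
  set C2 : ℝ := Real.sqrt (lam + (1 - lam) * S'.card / m) with hC2def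
  have hC1 : 0 ≤ C1 := Real.sqrt_nonneg _
  have hC2 : 0 ≤ C2 := Real.sqrt_nonneg _
  set M : Matrix (Fin m) (Fin m) ℝ := coordProj S' * P * coordProj S with hMdef
  have hmain : ∀ x : Fin m → ℝ, euclNorm (M.mulVec x) ≤ C1 * C2 * euclNorm x := by
    intro x
    set u : Fin m → ℝ := fun v => if v ∈ S then x v else 0 with hudef
    have hMx : M.mulVec x = fun v => if v ∈ S' then P.mulVec u v else 0 := by
      have h1 : (coordProj S).mulVec x = u := by
        funext v
        simp only [coordProj, Matrix.mulVec_diagonal, hudef]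
        split <;> simp
      have h2 : M.mulVec x = (coordProj S').mulVec (P.mulVec ((coordProj S).mulVec x)) := by
        rw [Matrix.mulVec_mulVec, Matrix.mulVec_mulVec, hMdef]
      rw [h2, h1]
      funext v
      simp only [coordProj, Matrix.mulVec_diagonal]
      split <;> simp
    set y : Fin m → ℝ := M.mulVec x with hydef
    set w : Fin m → ℝ := fun v => if v ∈ S' then y v else 0 with hwdef
    have hwy : w = y := by
      funext v
      simp only [hwdef, hydef, hMx]
      split <;> simp_all
    have tf1 := truncation_facts S x
    have tf2 := truncation_facts S' y
    have hkey := key_estimate hm P lam hsymm he hlam0 hlam1 hspec S S' x y u w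
      tf1.1 tf1.2 tf2.1 tf2.2
    have hform : ∑ v, w v * P.mulVec u v = ∑ v, y v ^ 2 := by
      apply Finset.sum_congr rfl
      intro v _
      rw [hwy]
      simp only [hMx]
      split <;> ring
    rw [hform] at hkey
    have hQ0 : 0 ≤ ∑ v, y v ^ 2 := Finset.sum_nonneg fun v _ => sq_nonneg _
    rw [abs_of_nonneg hQ0] at hkey
    -- goal : euclNorm y ≤ C1 * C2 * euclNorm x
    show euclNorm y ≤ C1 * C2 * euclNorm x
    rcases eq_or_lt_of_le hQ0 with hQz | hQz
    · rw [euclNorm, ← hQz, Real.sqrt_zero]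
      have := Real.sqrt_nonneg (∑ v, x v ^ 2)
      have : 0 ≤ euclNorm x := Real.sqrt_nonneg _
      exact mul_nonneg (mul_nonneg hC1 hC2) this
    · have hE : euclNorm y * euclNorm y = ∑ v, y v ^ 2 := Real.mul_self_sqrt hQ0
      have hE0 : 0 < euclNorm y := by
        rw [euclNorm]
        exact Real.sqrt_pos.mpr hQz
      have : euclNorm y * euclNorm y ≤ (C1 * C2 * euclNorm x) * euclNorm y := by
        rw [hE]
        calc ∑ v, y v ^ 2 ≤ C1 * euclNorm x * (C2 * euclNorm y) := hkey
          _ = (C1 * C2 * euclNorm x) * euclNorm y := by ring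
      exact le_of_mul_le_mul_right this hE0
  rw [matrixOpNorm]
  apply ContinuousLinearMap.opNorm_le_bound _ (mul_nonneg hC1 hC2)
  intro z
  have hfz : ∀ i, (LinearMap.toContinuousLinearMap (Matrix.toEuclideanLin M) z) i
      = M.mulVec (fun j => z j) i := fun i => rfl
  have hnz : ‖LinearMap.toContinuousLinearMap (Matrix.toEuclideanLin M) z‖
      = euclNorm (M.mulVec (fun j => z j)) := by
    rw [EuclideanSpace.norm_eq, euclNorm]
    congr 1
    apply Finset.sum_congr rfl
    intro i _
    rw [hfz i, Real.norm_eq_abs, sq_abs]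
  have hnz2 : ‖z‖ = euclNorm (fun j => z j) := by
    rw [EuclideanSpace.norm_eq, euclNorm]
    congr 1
    apply Finset.sum_congr rfl
    intro i _
    rw [Real.norm_eq_abs, sq_abs]
  rw [hnz, hnz2]
  exact hmain (fun j => z j)
end

section
/- Let G be a finite d-regular graph with random walk matrix P and spectral gap parameter λ = max_{i≥2}|λ_i(P)| < 1. For subsets S₁,...,S_k ⊆ 𝒱, the probability that a random walk started at a uniformly random vertex is in S_i at step i for all i = 1,...,k is at most ∏_{i=1}^{k-1} √(λ + (1-λ)|S_i|/|𝒱|) · √(λ + (1-λ)|S_{i+1}|/|𝒱|). -/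
open Matrix

namespace ExpanderWalkAux

variable {m : ℕ}

lemma euclNorm_nonneg (x : Fin m → ℝ) : 0 ≤ euclNorm x := Real.sqrt_nonneg _

lemma euclNorm_sq (x : Fin m → ℝ) : euclNorm x ^ 2 = ∑ v, x v ^ 2 :=
  Real.sq_sqrt (by positivity)

lemma euclNorm_le_of_sq_le {x : Fin m → ℝ} {a : ℝ} (ha : 0 ≤ a)
    (h : ∑ v, x v ^ 2 ≤ a ^ 2) : euclNorm x ≤ a := by
  have := Real.sqrt_le_sqrt h
  rwa [Real.sqrt_sq ha] at this

lemma euclNorm_triangle (x y : Fin m → ℝ) :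
    euclNorm (fun v => x v + y v) ≤ euclNorm x + euclNorm y := by
  apply euclNorm_le_of_sq_le (add_nonneg (euclNorm_nonneg x) (euclNorm_nonneg y))
  have hcs : ∑ v, x v * y v ≤ euclNorm x * euclNorm y :=
    Real.sum_mul_le_sqrt_mul_sqrt _ _ _
  have hx := euclNorm_sq x
  have hy := euclNorm_sq y
  have hexp : ∑ v, (x v + y v) ^ 2
      = (∑ v, x v ^ 2) + 2 * (∑ v, x v * y v) + ∑ v, y v ^ 2 := by
    rw [Finset.sum_congr rfl (fun v _ => show (x v + y v) ^ 2
      = x v ^ 2 + 2 * (x v * y v) + y v ^ 2 by ring)]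
    rw [Finset.sum_add_distrib, Finset.sum_add_distrib, ← Finset.mul_sum]
  rw [hexp]
  nlinarith [euclNorm_nonneg x, euclNorm_nonneg y]

/-- The chain of vectors `Π_{T n} P ⋯ P Π_{T 0} 𝟙`. -/
noncomputable def chain (P : Matrix (Fin m) (Fin m) ℝ) (T : ℕ → Finset (Fin m)) :
    ℕ → Fin m → ℝ
  | 0 => fun v => if v ∈ T 0 then 1 else 0
  | n + 1 => fun v => if v ∈ T (n + 1) then P.mulVec (chain P T n) v else 0

lemma chain_support (P : Matrix (Fin m) (Fin m) ℝ) (T : ℕ → Finset (Fin m)) (n : ℕ)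
    (v : Fin m) (hv : v ∉ T n) : chain P T n v = 0 := by
  cases n <;> simp [chain, hv]

lemma chain_eq (P : Matrix (Fin m) (Fin m) ℝ) (hsymm : P.IsSymm)
    (T : ℕ → Finset (Fin m)) : ∀ (n : ℕ) (w : Fin m), chain P T n w =
      ∑ v ∈ Finset.univ.filter
          (fun v : Fin (n + 1) → Fin m =>
            (∀ i : Fin (n + 1), v i ∈ T (i : ℕ)) ∧ v (Fin.last n) = w),
        ∏ j : Fin n, P (v j.castSucc) (v j.succ)
  | 0, w => by
    rw [Finset.sum_filter]
    rw [← Fintype.sum_equiv ((Equiv.funUnique (Fin 1) (Fin m)).symm)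
      (fun x : Fin m => if x ∈ T 0 ∧ x = w then (1:ℝ) else 0)
      (fun v : Fin 1 → Fin m =>
        if (∀ i : Fin 1, v i ∈ T (i : ℕ)) ∧ v (Fin.last 0) = w
          then ∏ j : Fin 0, P (v j.castSucc) (v j.succ) else 0)
      (by intro x; simp [Fin.forall_fin_one, Equiv.funUnique, Fin.last])]
    have h1 : ∀ x : Fin m, (if x ∈ T 0 ∧ x = w then (1:ℝ) else 0)
        = if x = w then (if x ∈ T 0 then (1:ℝ) else 0) else 0 := by
      intro x; by_cases hx : x = w <;> simp [hx]
    rw [Finset.sum_congr rfl (fun x _ => h1 x), Finset.sum_ite_eq' Finset.univ w]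
    simp [chain]
  | n + 1, w => by
    classical
    set F : (Fin (n + 1) → Fin m) → ℝ :=
      fun u => ∏ j : Fin n, P (u j.castSucc) (u j.succ) with hF
    set A : (Fin (n + 1) → Fin m) → Prop :=
      fun u => ∀ i : Fin (n + 1), u i ∈ T (i : ℕ) with hA
    have key : ∀ (x : Fin m) (u : Fin (n + 1) → Fin m),
        (if A u ∧ x ∈ T (n + 1) ∧ x = w then F u * P (u (Fin.last n)) x else 0)
        = (if ((∀ i : Fin (n + 2), (Fin.snoc u x : Fin (n + 2) → Fin m) i ∈ T (i : ℕ)) ∧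
              (Fin.snoc u x : Fin (n + 2) → Fin m) (Fin.last (n + 1)) = w)
            then ∏ j : Fin (n + 1),
              P ((Fin.snoc u x : Fin (n + 2) → Fin m) j.castSucc)
                ((Fin.snoc u x : Fin (n + 2) → Fin m) j.succ) else 0) := by
      intro x u
      have hcond : (∀ i : Fin (n + 2), (Fin.snoc u x : Fin (n + 2) → Fin m) i ∈ T (i : ℕ))
          ↔ (A u ∧ x ∈ T (n + 1)) := by
        constructor
        · intro h
          refine ⟨fun i => ?_, ?_⟩
          · have := h i.castSucc
            rwa [Fin.snoc_castSucc] at this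
          · have := h (Fin.last (n + 1))
            rwa [Fin.snoc_last] at this
        · rintro ⟨h1, h2⟩ i
          induction i using Fin.lastCases with
          | last => rw [Fin.snoc_last]; exact h2
          | cast i => rw [Fin.snoc_castSucc]; exact h1 i
      have hprod : (∏ j : Fin (n + 1),
            P ((Fin.snoc u x : Fin (n + 2) → Fin m) j.castSucc)
              ((Fin.snoc u x : Fin (n + 2) → Fin m) j.succ))
          = F u * P (u (Fin.last n)) x := by
        rw [Fin.prod_univ_castSucc]
        congr 1
        · apply Finset.prod_congr rfl
          intro j _
          rw [Fin.succ_castSucc, Fin.snoc_castSucc, Fin.snoc_castSucc]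
        · rw [Fin.snoc_castSucc, Fin.succ_last, Fin.snoc_last]
      rw [Fin.snoc_last, hprod]
      by_cases h : A u ∧ x ∈ T (n + 1) ∧ x = w
      · rw [if_pos h, if_pos ⟨hcond.2 ⟨h.1, h.2.1⟩, h.2.2⟩]
      · rw [if_neg h, if_neg (fun hc => h ⟨(hcond.1 hc.1).1, (hcond.1 hc.1).2, hc.2⟩)]
    rw [Finset.sum_filter]
    rw [← Fintype.sum_equiv (Fin.snocEquiv (fun _ => Fin m))
      (fun p : Fin m × (Fin (n + 1) → Fin m) =>
        if A p.2 ∧ p.1 ∈ T (n + 1) ∧ p.1 = w then F p.2 * P (p.2 (Fin.last n)) p.1 else 0)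
      _ (fun p => key p.1 p.2)]
    rw [Fintype.sum_prod_type]
    have hx1 : ∀ x : Fin m,
        (∑ u : Fin (n + 1) → Fin m,
          if A u ∧ x ∈ T (n + 1) ∧ x = w then F u * P (u (Fin.last n)) x else 0)
        = if x = w then (if x ∈ T (n + 1) then
            (∑ u : Fin (n + 1) → Fin m,
              if A u then F u * P (u (Fin.last n)) x else 0) else 0) else 0 := by
      intro x
      by_cases hxw : x = w
      · subst hxw
        by_cases hxT : x ∈ T (n + 1)
        · simp [hxT]
        · simp [hxT]
      · simp [hxw]
    rw [Finset.sum_congr rfl (fun x _ => hx1 x), Finset.sum_ite_eq' Finset.univ w]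
    simp only [Finset.mem_univ, if_pos]
    -- remaining : chain (n+1) w = if w ∈ T (n+1) then ∑ u, if A u then F u * P (u last) w else 0
    show chain P T (n + 1) w = _
    rw [show chain P T (n + 1) w
      = (if w ∈ T (n + 1) then P.mulVec (chain P T n) w else 0) from rfl]
    by_cases hw : w ∈ T (n + 1)
    · rw [if_pos hw, if_pos hw]
      have hfib : (∑ u ∈ Finset.univ.filter A, F u * P (u (Fin.last n)) w)
          = ∑ z : Fin m, ∑ u ∈ (Finset.univ.filter A).filter
              (fun u => u (Fin.last n) = z), F u * P (u (Fin.last n)) w :=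
        (Finset.sum_fiberwise_of_maps_to (fun u _ => Finset.mem_univ _) _).symm
      rw [← Finset.sum_filter, hfib]
      have hz : ∀ z : Fin m,
          (∑ u ∈ (Finset.univ.filter A).filter (fun u => u (Fin.last n) = z),
            F u * P (u (Fin.last n)) w)
          = chain P T n z * P z w := by
        intro z
        rw [Finset.filter_filter]
        rw [chain_eq P hsymm T n z, Finset.sum_mul]
        apply Finset.sum_congr rfl
        intro u hu
        rw [Finset.mem_filter] at hu
        rw [hu.2.2]
      rw [Finset.sum_congr rfl (fun z _ => hz z)]
      rw [Matrix.mulVec]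
      apply Finset.sum_congr rfl
      intro z _
      rw [hsymm.apply, mul_comm]
    · rw [if_neg hw, if_neg hw]

lemma sum_chain (P : Matrix (Fin m) (Fin m) ℝ) (hsymm : P.IsSymm)
    (T : ℕ → Finset (Fin m)) (n : ℕ) :
    ∑ v ∈ Finset.univ.filter
        (fun v : Fin (n + 1) → Fin m => ∀ i : Fin (n + 1), v i ∈ T (i : ℕ)),
      ∏ j : Fin n, P (v j.castSucc) (v j.succ) = ∑ w, chain P T n w := by
  classical
  rw [Finset.sum_congr rfl (fun w (_ : w ∈ Finset.univ) => chain_eq P hsymm T n w)] at *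
  rw [← Finset.sum_fiberwise_of_maps_to
    (g := fun v : Fin (n + 1) → Fin m => v (Fin.last n))
    (t := Finset.univ) (fun u _ => Finset.mem_univ _) _]
  apply Finset.sum_congr rfl
  intro w _
  rw [Finset.filter_filter]


lemma scalar_ineq {lam p q : ℝ} (hp : 0 ≤ p) (hq : 0 ≤ q)
    (hl0 : 0 ≤ lam) (hl1 : lam ≤ 1) :
    lam + (1 - lam) * p * q ≤
      Real.sqrt (lam + (1 - lam) * p ^ 2) * Real.sqrt (lam + (1 - lam) * q ^ 2) := by
  rw [← Real.sqrt_mul (by nlinarith)]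
  apply Real.le_sqrt_of_sq_le
  nlinarith [mul_nonneg (mul_nonneg hl0 (by linarith : (0:ℝ) ≤ 1 - lam)) (sq_nonneg (p - q)),
    mul_nonneg hp hq]

lemma key_step (hm : 0 < m) (P : Matrix (Fin m) (Fin m) ℝ) (lam : ℝ)
    (hsymm : P.IsSymm)
    (he : P.mulVec (fun _ => 1 / Real.sqrt m) = fun _ => 1 / Real.sqrt m)
    (hlam0 : 0 ≤ lam) (hlam1 : lam < 1)
    (hspec : ∀ x : Fin m → ℝ, (∑ v, x v) = 0 →
      euclNorm (P.mulVec x) ≤ lam * euclNorm x)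
    (A B : Finset (Fin m)) (y : Fin m → ℝ) (hy : ∀ v, v ∉ A → y v = 0) :
    euclNorm (fun v => if v ∈ B then P.mulVec y v else 0) ≤
      (Real.sqrt (lam + (1 - lam) * A.card / m) *
        Real.sqrt (lam + (1 - lam) * B.card / m)) * euclNorm y := by
  have hm' : (0:ℝ) < m := by exact_mod_cast hm
  have hsm : (0:ℝ) < Real.sqrt m := Real.sqrt_pos.2 hm'
  -- row sums are 1
  have hrow : ∀ u, ∑ v, P u v = 1 := by
    intro u
    have h := congrFun he u
    simp only [Matrix.mulVec, dotProduct] at h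
    have h2 : (∑ v, P u v) * (1 / Real.sqrt m) = 1 * (1 / Real.sqrt m) := by
      rw [Finset.sum_mul]; rw [h]; ring
    exact mul_right_cancel₀ (by positivity) h2
  have hcol : ∀ u, ∑ v, P v u = 1 := by
    intro u
    rw [Finset.sum_congr rfl (fun v _ => hsymm.apply u v)]
    exact hrow u
  set s : ℝ := (∑ v, y v) / m with hs
  set w : Fin m → ℝ := fun v => y v - s with hw
  have hws : ∑ v, w v = 0 := by
    simp only [hw, Finset.sum_sub_distrib, Finset.sum_const, Finset.card_univ,
      Fintype.card_fin, nsmul_eq_mul, hs]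
    field_simp
    ring
  have hPy : ∀ v, P.mulVec y v = s + P.mulVec w v := by
    intro v
    simp only [Matrix.mulVec, dotProduct, hw]
    rw [Finset.sum_congr rfl (fun u _ => show P v u * (y u - s)
      = P v u * y u - P v u * s by ring), Finset.sum_sub_distrib, ← Finset.sum_mul, hrow v]
    ring
  have hPws : ∑ v, P.mulVec w v = 0 := by
    simp only [Matrix.mulVec, dotProduct]
    rw [Finset.sum_comm]
    rw [Finset.sum_congr rfl (fun u _ => by rw [← Finset.sum_mul, hcol u])]
    simpa using hws
  have hysq : ∑ v, y v ^ 2 = m * s ^ 2 + ∑ v, w v ^ 2 := by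
    have : ∀ v, y v ^ 2 = w v ^ 2 + 2 * s * w v + s ^ 2 := by
      intro v; simp only [hw]; ring
    rw [Finset.sum_congr rfl (fun v _ => this v), Finset.sum_add_distrib,
      Finset.sum_add_distrib, ← Finset.mul_sum, hws, Finset.sum_const,
      Finset.card_univ, Fintype.card_fin, nsmul_eq_mul]
    ring
  -- bound on s
  have hyA : ∑ v, y v = ∑ v ∈ A, y v := by
    rw [← Finset.sum_subset (Finset.subset_univ A) (fun v _ hv => hy v hv)]
  have hsbound : (∑ v, y v) ^ 2 ≤ A.card * ∑ v, y v ^ 2 := by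
    rw [hyA]
    calc (∑ v ∈ A, y v) ^ 2 = (∑ v ∈ A, y v * 1) ^ 2 := by simp
    _ ≤ (∑ v ∈ A, y v ^ 2) * ∑ v ∈ A, (1:ℝ) ^ 2 := Finset.sum_mul_sq_le_sq_mul_sq A _ _
    _ = (∑ v ∈ A, y v ^ 2) * A.card := by simp [mul_comm]
    _ ≤ (∑ v, y v ^ 2) * A.card :=
        mul_le_mul_of_nonneg_right (Finset.sum_le_sum_of_subset_of_nonneg
          (Finset.subset_univ A) (fun v _ _ => sq_nonneg _)) (by positivity)
    _ = A.card * ∑ v, y v ^ 2 := mul_comm _ _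
  -- Pw bound
  have hPw : ∑ v, P.mulVec w v ^ 2 ≤ lam ^ 2 * ∑ v, w v ^ 2 := by
    have h1 := hspec w hws
    have h2 : euclNorm (P.mulVec w) ^ 2 ≤ (lam * euclNorm w) ^ 2 := by
      apply pow_le_pow_left₀ (euclNorm_nonneg _) h1
    rw [euclNorm_sq] at h2
    calc ∑ v, P.mulVec w v ^ 2 ≤ (lam * euclNorm w) ^ 2 := h2
    _ = lam ^ 2 * euclNorm w ^ 2 := by ring
    _ = lam ^ 2 * ∑ v, w v ^ 2 := by rw [euclNorm_sq]
  -- decompose the target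
  have hdecomp : (fun v => if v ∈ B then P.mulVec y v else 0)
      = fun v => (if v ∈ B then (1 - lam) * s else 0)
        + (if v ∈ B then lam * s + P.mulVec w v else 0) := by
    funext v
    by_cases hv : v ∈ B
    · simp only [hv, if_pos]
      rw [hPy v]; ring
    · simp [hv]
  have hG1 : euclNorm (fun v => if v ∈ B then (1 - lam) * s else 0)
      = |(1 - lam) * s| * Real.sqrt B.card := by
    unfold euclNorm
    rw [Finset.sum_congr rfl (fun v (_ : v ∈ Finset.univ) => show
      (if v ∈ B then (1 - lam) * s else 0) ^ 2
        = if v ∈ B then ((1 - lam) * s) ^ 2 else 0 by split <;> simp)]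
    rw [Finset.sum_ite_mem, Finset.univ_inter, Finset.sum_const, nsmul_eq_mul]
    rw [Real.sqrt_mul (by positivity), Real.sqrt_sq_eq_abs, mul_comm]
  have hG2 : euclNorm (fun v => if v ∈ B then lam * s + P.mulVec w v else 0)
      ≤ lam * euclNorm y := by
    apply euclNorm_le_of_sq_le (mul_nonneg hlam0 (euclNorm_nonneg y))
    have hterm : ∀ v, (if v ∈ B then lam * s + P.mulVec w v else 0) ^ 2
        ≤ (lam * s + P.mulVec w v) ^ 2 := by
      intro v; split
      · exact le_refl _
      · simpa using sq_nonneg (lam * s + P.mulVec w v)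
    calc ∑ v, (if v ∈ B then lam * s + P.mulVec w v else 0) ^ 2
        ≤ ∑ v, (lam * s + P.mulVec w v) ^ 2 := Finset.sum_le_sum (fun v _ => hterm v)
      _ = m * (lam * s) ^ 2 + 2 * (lam * s) * (∑ v, P.mulVec w v)
            + ∑ v, P.mulVec w v ^ 2 := by
          rw [Finset.sum_congr rfl (fun v _ => show (lam * s + P.mulVec w v) ^ 2
            = (lam * s) ^ 2 + 2 * (lam * s) * P.mulVec w v + P.mulVec w v ^ 2 by ring)]
          rw [Finset.sum_add_distrib, Finset.sum_add_distrib, ← Finset.mul_sum,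
            Finset.sum_const, Finset.card_univ, Fintype.card_fin, nsmul_eq_mul]
      _ = m * (lam * s) ^ 2 + ∑ v, P.mulVec w v ^ 2 := by rw [hPws]; ring
      _ ≤ m * (lam * s) ^ 2 + lam ^ 2 * ∑ v, w v ^ 2 := by linarith
      _ = lam ^ 2 * (m * s ^ 2 + ∑ v, w v ^ 2) := by ring
      _ = lam ^ 2 * ∑ v, y v ^ 2 := by rw [hysq]
      _ = (lam * euclNorm y) ^ 2 := by rw [mul_pow, euclNorm_sq]
  -- combine
  have hmain : euclNorm (fun v => if v ∈ B then P.mulVec y v else 0)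
      ≤ (1 - lam) * |s| * Real.sqrt B.card + lam * euclNorm y := by
    rw [hdecomp]
    refine (euclNorm_triangle _ _).trans ?_
    rw [hG1, abs_mul, abs_of_nonneg (by linarith : (0:ℝ) ≤ 1 - lam)]
    linarith [hG2]
  -- |s| bound
  have hsabs : |s| * m ≤ Real.sqrt A.card * euclNorm y := by
    have h1 : (|s| * m) ^ 2 ≤ (Real.sqrt A.card * euclNorm y) ^ 2 := by
      rw [mul_pow, mul_pow, Real.sq_sqrt (by positivity : (0:ℝ) ≤ (A.card:ℝ)),
        euclNorm_sq, sq_abs]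
      calc s ^ 2 * (m:ℝ) ^ 2 = (∑ v, y v) ^ 2 := by
            rw [hs]; field_simp
        _ ≤ A.card * ∑ v, y v ^ 2 := hsbound
    have h2 : 0 ≤ Real.sqrt A.card * euclNorm y :=
      mul_nonneg (Real.sqrt_nonneg _) (euclNorm_nonneg y)
    have h3 := Real.sqrt_le_sqrt h1
    rwa [Real.sqrt_sq (by positivity), Real.sqrt_sq h2] at h3
  -- assemble
  set p := Real.sqrt ((A.card : ℝ) / m) with hpdef
  set q := Real.sqrt ((B.card : ℝ) / m) with hqdef
  have hp2 : p ^ 2 = (A.card : ℝ) / m := Real.sq_sqrt (by positivity)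
  have hq2 : q ^ 2 = (B.card : ℝ) / m := Real.sq_sqrt (by positivity)
  have hp' : p = Real.sqrt A.card / Real.sqrt m := Real.sqrt_div (by positivity) _
  have hq' : q = Real.sqrt B.card / Real.sqrt m := Real.sqrt_div (by positivity) _
  have hmm : Real.sqrt m * Real.sqrt m = m := Real.mul_self_sqrt hm'.le
  have hpq : p * q * m = Real.sqrt A.card * Real.sqrt B.card := by
    rw [hp', hq', div_mul_div_comm, hmm, div_mul_cancel₀]
    exact ne_of_gt hm'
  have hyn := euclNorm_nonneg y
  have h6 : |s| * Real.sqrt B.card * m ≤ (p * q) * euclNorm y * m := by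
    calc |s| * Real.sqrt B.card * m = (|s| * m) * Real.sqrt B.card := by ring
      _ ≤ (Real.sqrt A.card * euclNorm y) * Real.sqrt B.card :=
          mul_le_mul_of_nonneg_right hsabs (Real.sqrt_nonneg _)
      _ = (p * q * m) * euclNorm y := by rw [hpq]; ring
      _ = (p * q) * euclNorm y * m := by ring
  have h7 : |s| * Real.sqrt B.card ≤ (p * q) * euclNorm y :=
    le_of_mul_le_mul_right (by linarith) hm'
  have h5 : (1 - lam) * |s| * Real.sqrt B.card ≤ (1 - lam) * (p * q) * euclNorm y := by
    have h8 := mul_le_mul_of_nonneg_left h7 (show (0:ℝ) ≤ 1 - lam by linarith)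
    calc (1 - lam) * |s| * Real.sqrt B.card = (1 - lam) * (|s| * Real.sqrt B.card) := by ring
      _ ≤ (1 - lam) * ((p * q) * euclNorm y) := h8
      _ = (1 - lam) * (p * q) * euclNorm y := by ring
  calc euclNorm (fun v => if v ∈ B then P.mulVec y v else 0)
      ≤ (1 - lam) * |s| * Real.sqrt B.card + lam * euclNorm y := hmain
    _ ≤ (1 - lam) * (p * q) * euclNorm y + lam * euclNorm y := by linarith
    _ = (lam + (1 - lam) * p * q) * euclNorm y := by ring
    _ ≤ (Real.sqrt (lam + (1 - lam) * p ^ 2) * Real.sqrt (lam + (1 - lam) * q ^ 2))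
          * euclNorm y :=
        mul_le_mul_of_nonneg_right
          (scalar_ineq (Real.sqrt_nonneg _) (Real.sqrt_nonneg _) hlam0 hlam1.le) hyn
    _ = (Real.sqrt (lam + (1 - lam) * A.card / m) *
          Real.sqrt (lam + (1 - lam) * B.card / m)) * euclNorm y := by
        rw [hp2, hq2, mul_div_assoc, mul_div_assoc]


lemma castSucc_add_one {n : ℕ} (j : Fin n) :
    (j.castSucc : Fin (n + 1)) + 1 = j.succ := by
  have hj := j.isLt
  apply Fin.ext
  rw [Fin.val_add]
  have h1 : (1 : Fin (n + 1)).val = 1 % (n + 1) := rfl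
  rw [h1]
  have h2 : 1 % (n + 1) = 1 := Nat.mod_eq_of_lt (by omega)
  rw [h2]
  simp only [Fin.coe_castSucc, Fin.val_succ]
  exact Nat.mod_eq_of_lt (by omega)

lemma filter_prod_eq {n : ℕ} {M : Type*} [CommMonoid M] (f : Fin (n + 1) → M) :
    ∏ i ∈ Finset.univ.filter (fun i : Fin (n + 1) => (i : ℕ) + 1 < n + 1), f i
      = ∏ j : Fin n, f j.castSucc := by
  have himg : Finset.univ.filter (fun i : Fin (n + 1) => (i : ℕ) + 1 < n + 1)
      = Finset.image Fin.castSucc Finset.univ := by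
    ext i
    simp only [Finset.mem_filter, Finset.mem_image, Finset.mem_univ, true_and]
    constructor
    · intro h
      exact ⟨⟨i.val, by omega⟩, by apply Fin.ext; simp⟩
    · rintro ⟨j, rfl⟩
      have := j.isLt
      simp only [Fin.coe_castSucc]
      omega
  rw [himg, Finset.prod_image (fun a _ b _ h => Fin.castSucc_injective n h)]

lemma chain_norm_le (hm : 0 < m) (P : Matrix (Fin m) (Fin m) ℝ) (lam : ℝ)
    (hsymm : P.IsSymm)
    (he : P.mulVec (fun _ => 1 / Real.sqrt m) = fun _ => 1 / Real.sqrt m)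
    (hlam0 : 0 ≤ lam) (hlam1 : lam < 1)
    (hspec : ∀ x : Fin m → ℝ, (∑ v, x v) = 0 →
      euclNorm (P.mulVec x) ≤ lam * euclNorm x)
    (T : ℕ → Finset (Fin m)) : ∀ n : ℕ,
    euclNorm (chain P T n) ≤
      (∏ j ∈ Finset.range n, Real.sqrt (lam + (1 - lam) * (T j).card / m) *
        Real.sqrt (lam + (1 - lam) * (T (j + 1)).card / m)) * Real.sqrt m
  | 0 => by
    rw [Finset.range_zero, Finset.prod_empty, one_mul]
    apply euclNorm_le_of_sq_le (Real.sqrt_nonneg _)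
    rw [Real.sq_sqrt (by positivity : (0:ℝ) ≤ (m:ℝ))]
    have : ∀ v : Fin m, (chain P T 0 v) ^ 2 = if v ∈ T 0 then (1:ℝ) else 0 := by
      intro v
      show (if v ∈ T 0 then (1:ℝ) else 0) ^ 2 = _
      split <;> simp
    rw [Finset.sum_congr rfl (fun v _ => this v), Finset.sum_ite_mem,
      Finset.univ_inter, Finset.sum_const, nsmul_eq_mul, mul_one]
    have hc : (T 0).card ≤ m := by simpa using Finset.card_le_univ (T 0)
    exact_mod_cast hc
  | n + 1 => by
    have hkey := key_step hm P lam hsymm he hlam0 hlam1 hspec (T n) (T (n + 1))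
      (chain P T n) (chain_support P T n)
    have hstep : euclNorm (chain P T (n + 1)) ≤
        (Real.sqrt (lam + (1 - lam) * (T n).card / m) *
          Real.sqrt (lam + (1 - lam) * (T (n + 1)).card / m)) * euclNorm (chain P T n) :=
      hkey
    have hIH := chain_norm_le hm P lam hsymm he hlam0 hlam1 hspec T n
    have hg : (0:ℝ) ≤ Real.sqrt (lam + (1 - lam) * (T n).card / m) *
        Real.sqrt (lam + (1 - lam) * (T (n + 1)).card / m) :=
      mul_nonneg (Real.sqrt_nonneg _) (Real.sqrt_nonneg _)
    calc euclNorm (chain P T (n + 1))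
        ≤ (Real.sqrt (lam + (1 - lam) * (T n).card / m) *
            Real.sqrt (lam + (1 - lam) * (T (n + 1)).card / m)) * euclNorm (chain P T n) :=
          hstep
      _ ≤ (Real.sqrt (lam + (1 - lam) * (T n).card / m) *
            Real.sqrt (lam + (1 - lam) * (T (n + 1)).card / m)) *
          ((∏ j ∈ Finset.range n, Real.sqrt (lam + (1 - lam) * (T j).card / m) *
            Real.sqrt (lam + (1 - lam) * (T (j + 1)).card / m)) * Real.sqrt m) :=
          mul_le_mul_of_nonneg_left hIH hg
      _ = (∏ j ∈ Finset.range (n + 1), Real.sqrt (lam + (1 - lam) * (T j).card / m) *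
            Real.sqrt (lam + (1 - lam) * (T (j + 1)).card / m)) * Real.sqrt m := by
          rw [Finset.prod_range_succ]; ring

end ExpanderWalkAux

open ExpanderWalkAux in
/-- Let `G` be a finite regular graph on `m` vertices with random walk matrix
`P` (symmetric, nonnegative entries, eigenvalue `1` on the uniform vector, and
all other eigenvalues at most `λ < 1` in absolute value). For subsets
`S₁,…,S_k` of the vertex set, the probability that a random walk started at a
uniformly random vertex is in `S_i` at step `i` for all `i = 1,…,k` is at most
`∏_{i=1}^{k-1} √(λ + (1-λ)|S_i|/m) · √(λ + (1-λ)|S_{i+1}|/m)`. -/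
theorem expander_walk_chernoff
    {m : ℕ} (hm : 0 < m) (P : Matrix (Fin m) (Fin m) ℝ) (lam : ℝ)
    (hsymm : P.IsSymm) (hnonneg : ∀ u v, 0 ≤ P u v)
    (he : P.mulVec (fun _ => 1 / Real.sqrt m) = fun _ => 1 / Real.sqrt m)
    (hlam0 : 0 ≤ lam) (hlam1 : lam < 1)
    (hspec : ∀ x : Fin m → ℝ, (∑ v, x v) = 0 →
      euclNorm (P.mulVec x) ≤ lam * euclNorm x)
    (k : ℕ) [NeZero k] (S : Fin k → Finset (Fin m)) :
    ∑ v ∈ Finset.univ.filter (fun v : Fin k → Fin m => ∀ i, v i ∈ S i),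
        (1 / (m : ℝ)) *
          ∏ i ∈ Finset.univ.filter (fun i : Fin k => (i : ℕ) + 1 < k),
            P (v i) (v (i + 1)) ≤
      ∏ i ∈ Finset.univ.filter (fun i : Fin k => (i : ℕ) + 1 < k),
        Real.sqrt (lam + (1 - lam) * (S i).card / m) *
          Real.sqrt (lam + (1 - lam) * (S (i + 1)).card / m) := by
  classical
  obtain ⟨n, rfl⟩ : ∃ n, k = n + 1 :=
    ⟨k - 1, (Nat.succ_pred_eq_of_pos (Nat.pos_of_ne_zero (NeZero.ne k))).symm⟩
  have hm' : (0:ℝ) < m := by exact_mod_cast hm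
  set T : ℕ → Finset (Fin m) := fun j => S (Fin.ofNat (n + 1) j) with hT
  have hTS : ∀ i : Fin (n + 1), T (i : ℕ) = S i := by
    intro i; rw [hT]; simp [Fin.cast_val_eq_self]
  -- rewrite the products over the filtered index set
  have hprodP : ∀ v : Fin (n + 1) → Fin m,
      (∏ i ∈ Finset.univ.filter (fun i : Fin (n + 1) => (i : ℕ) + 1 < n + 1),
        P (v i) (v (i + 1))) = ∏ j : Fin n, P (v j.castSucc) (v j.succ) := by
    intro v
    rw [filter_prod_eq (fun i => P (v i) (v (i + 1)))]
    exact Finset.prod_congr rfl (fun j _ => by rw [castSucc_add_one])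
  have hprodR : (∏ i ∈ Finset.univ.filter (fun i : Fin (n + 1) => (i : ℕ) + 1 < n + 1),
        Real.sqrt (lam + (1 - lam) * (S i).card / m) *
          Real.sqrt (lam + (1 - lam) * (S (i + 1)).card / m))
      = ∏ j ∈ Finset.range n, Real.sqrt (lam + (1 - lam) * (T j).card / m) *
          Real.sqrt (lam + (1 - lam) * (T (j + 1)).card / m) := by
    rw [filter_prod_eq (fun i => Real.sqrt (lam + (1 - lam) * (S i).card / m) *
      Real.sqrt (lam + (1 - lam) * (S (i + 1)).card / m))]
    rw [← Fin.prod_univ_eq_prod_range (fun a : ℕ =>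
      Real.sqrt (lam + (1 - lam) * (T a).card / m) *
        Real.sqrt (lam + (1 - lam) * (T (a + 1)).card / m)) n]
    apply Finset.prod_congr rfl
    intro j _
    have h1 : S j.castSucc = T (j : ℕ) := by
      rw [← hTS j.castSucc]; congr 1
    have h2 : S (j.castSucc + 1) = T ((j : ℕ) + 1) := by
      rw [castSucc_add_one, ← hTS j.succ]; congr 1
    rw [h1, h2]
  rw [hprodR]
  -- rewrite the sum
  have hfilter : Finset.univ.filter (fun v : Fin (n + 1) → Fin m => ∀ i, v i ∈ S i)
      = Finset.univ.filter
          (fun v : Fin (n + 1) → Fin m => ∀ i : Fin (n + 1), v i ∈ T (i : ℕ)) := by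
    apply Finset.filter_congr
    intro v _
    constructor
    · intro h i; rw [hTS i]; exact h i
    · intro h i; rw [← hTS i]; exact h i
  rw [Finset.sum_congr hfilter (fun v _ => by rw [hprodP v])]
  rw [← Finset.mul_sum, sum_chain P hsymm T n]
  -- final estimate
  set Q : ℝ := ∏ j ∈ Finset.range n, Real.sqrt (lam + (1 - lam) * (T j).card / m) *
      Real.sqrt (lam + (1 - lam) * (T (j + 1)).card / m) with hQ
  have hsum : ∑ w, chain P T n w ≤ euclNorm (chain P T n) * Real.sqrt m := by
    calc ∑ w, chain P T n w = ∑ w, chain P T n w * 1 := by simp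
      _ ≤ Real.sqrt (∑ w, chain P T n w ^ 2) * Real.sqrt (∑ _w : Fin m, (1:ℝ) ^ 2) :=
          Real.sum_mul_le_sqrt_mul_sqrt _ _ _
      _ = euclNorm (chain P T n) * Real.sqrt m := by
          rw [euclNorm]; congr 2; simp
  have hchain := chain_norm_le hm P lam hsymm he hlam0 hlam1 hspec T n
  have hfin : euclNorm (chain P T n) * Real.sqrt m ≤ (Q * Real.sqrt m) * Real.sqrt m :=
    mul_le_mul_of_nonneg_right hchain (Real.sqrt_nonneg _)
  have heq : (1 / (m:ℝ)) * ((Q * Real.sqrt m) * Real.sqrt m) = Q := by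
    rw [mul_assoc, Real.mul_self_sqrt hm'.le]
    field_simp
  calc (1 / (m:ℝ)) * ∑ w, chain P T n w
      ≤ (1 / (m:ℝ)) * (euclNorm (chain P T n) * Real.sqrt m) :=
        mul_le_mul_of_nonneg_left hsum (by positivity)
    _ ≤ (1 / (m:ℝ)) * ((Q * Real.sqrt m) * Real.sqrt m) :=
        mul_le_mul_of_nonneg_left hfin (by positivity)
    _ = Q := heq
end

section
/- Let α₁,...,α_{2^r-1} be the nonzero elements of GF(2^r), let M be the (2^r-1) × k matrix over GF(2^r) with rows (1, α_i, α_i², ..., α_i^{k-1}), and let M̃ be the corresponding (2^r-1) × kr matrix over GF(2) obtained by expanding each field element in a GF(2)-basis. If Z is uniformly distributed on GF(2)^{kr}, then the coordinates of X = M̃Z are k-wise independent uniform bits: for every set I of k indices, (X_i)_{i∈I} is uniformly distributed on GF(2)^k. -/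
open Polynomial

open scoped ENNReal

/-- Pushforward of the uniform distribution under a surjective additive
homomorphism of finite additive groups is uniform. -/
lemma pmf_map_uniform_of_addHom {A B : Type*} [Fintype A] [Fintype B]
    [AddGroup A] [AddGroup B] [Nonempty A] [Nonempty B] [DecidableEq B]
    (f : A →+ B) (hf : Function.Surjective f) :
    PMF.map f (PMF.uniformOfFintype A) = PMF.uniformOfFintype B := by
  classical
  -- cardinality of each fiber equals the cardinality of the kernel
  have hcard : Fintype.card A = Fintype.card B * Fintype.card (f.ker) := by
    have e1 : A ≃ (A ⧸ f.ker) × f.ker :=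
      AddSubgroup.addGroupEquivQuotientProdAddSubgroup
    have e2 : (A ⧸ f.ker) ≃ B :=
      (QuotientAddGroup.quotientKerEquivOfSurjective f hf).toEquiv
    rw [Fintype.card_congr e1, Fintype.card_prod, Fintype.card_congr e2]
  ext y
  rw [PMF.map_apply, PMF.uniformOfFintype_apply, tsum_fintype]
  simp only [PMF.uniformOfFintype_apply]
  obtain ⟨a0, ha0⟩ := hf y
  have hfib : (Finset.univ.filter (fun a => y = f a)).card = Fintype.card f.ker := by
    have e : {a // y = f a} ≃ f.ker := by
      refine Equiv.subtypeEquiv (Equiv.subRight a0) fun a => ?_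
      simp only [Equiv.subRight_apply, AddMonoidHom.mem_ker, map_sub, ha0, sub_eq_zero]
      exact eq_comm
    rw [← Fintype.card_subtype, Fintype.card_congr e]
  rw [← Finset.sum_filter, Finset.sum_const, hfib]
  have hB : (Fintype.card B : ℝ≥0∞) ≠ 0 := by
    simp [Fintype.card_ne_zero]
  have hK : (Fintype.card f.ker : ℝ≥0∞) ≠ 0 := by
    have : Nonempty f.ker := ⟨⟨0, map_zero f⟩⟩
    simp only [ne_eq, Nat.cast_eq_zero]
    exact Fintype.card_ne_zero
  rw [hcard]
  push_cast
  rw [ENNReal.mul_inv (Or.inl hB) (Or.inr hK), nsmul_eq_mul, mul_comm (Fintype.card B : ℝ≥0∞)⁻¹,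
    ← mul_assoc, ENNReal.mul_inv_cancel hK (by simp), one_mul]

/-- **Alon–Babai–Itai construction of `k`-wise independent bits.**
Let `α₁,…,α_{2^r-1}` be the nonzero elements of `GF(2^r)`, and let `M̃` be the
`(2^r-1) × kr` matrix over `GF(2)` whose row `i` is the concatenation of the
`GF(2)`-basis expansions of `1, αᵢ, αᵢ², …, αᵢ^{k-1}`. If `Z` is uniformly
distributed on `GF(2)^{kr}`, then the coordinates of `X = M̃Z` are `k`-wise
independent uniform bits: for every set `I` of `k` indices, `(Xᵢ)_{i∈I}` is
uniformly distributed on `GF(2)^k`. -/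
theorem abi_kwise_independent_bits
    (r k : ℕ) (hr : 1 ≤ r) (hk : 1 ≤ k)
    (α : Fin (2 ^ r - 1) → GaloisField 2 r)
    (hinj : Function.Injective α) (hne : ∀ i, α i ≠ 0)
    (b : Module.Basis (Fin r) (ZMod 2) (GaloisField 2 r))
    (I : Finset (Fin (2 ^ r - 1))) (hI : I.card = k) :
    PMF.map
        (fun Z : Fin k × Fin r → ZMod 2 => fun i : I =>
          ∑ j : Fin k, ∑ s : Fin r, b.repr (α i ^ (j : ℕ)) s * Z (j, s))
        (PMF.uniformOfFintype (Fin k × Fin r → ZMod 2)) =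
      PMF.uniformOfFintype ((i : I) → ZMod 2) := by
  classical
  -- the map as an additive homomorphism
  let T : (Fin k × Fin r → ZMod 2) →+ ((i : I) → ZMod 2) :=
    { toFun := fun Z => fun i : I =>
        ∑ j : Fin k, ∑ s : Fin r, b.repr (α i ^ (j : ℕ)) s * Z (j, s)
      map_zero' := by funext i; simp
      map_add' := by
        intro x y; funext i
        simp [mul_add, Finset.sum_add_distrib] }
  have hsurj : Function.Surjective T := by
    intro v
    have hinjOn : Set.InjOn α I := fun x _ y _ h => hinj h
    have z : Fin r := ⟨0, hr⟩
    set w : Fin (2 ^ r - 1) → GaloisField 2 r := fun i =>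
      if h : i ∈ I then (v ⟨i, h⟩) • b z else 0 with hw
    set p := Lagrange.interpolate I α w with hp
    have hdeg : p.natDegree < k := by
      rcases eq_or_ne p 0 with h0 | h0
      · rw [h0, Polynomial.natDegree_zero]; exact hk
      · have := Lagrange.degree_interpolate_lt w hinjOn
        rw [← hp, hI] at this
        exact (Polynomial.natDegree_lt_iff_degree_lt h0).2 (by exact_mod_cast this)
    refine ⟨fun js => b.coord z (p.coeff js.1 * b js.2), ?_⟩
    funext i
    show ∑ j : Fin k, ∑ s : Fin r,
        b.repr (α i ^ (j : ℕ)) s * b.coord z (p.coeff j * b s) = v i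
    have hstep : ∀ j : Fin k, ∑ s : Fin r,
        b.repr (α i ^ (j : ℕ)) s * b.coord z (p.coeff j * b s)
        = b.coord z (p.coeff j * α i ^ (j : ℕ)) := by
      intro j
      have h1 : ∑ s : Fin r, b.repr (α i ^ (j : ℕ)) s * b.coord z (p.coeff j * b s)
          = b.coord z (∑ s : Fin r, b.repr (α i ^ (j : ℕ)) s • (p.coeff j * b s)) := by
        rw [map_sum]
        exact Finset.sum_congr rfl fun s _ => by rw [map_smul, smul_eq_mul]
      rw [h1]
      congr 1
      calc ∑ s : Fin r, b.repr (α i ^ (j : ℕ)) s • (p.coeff j * b s)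
          = ∑ s : Fin r, p.coeff j * (b.repr (α i ^ (j : ℕ)) s • b s) := by
            exact Finset.sum_congr rfl fun s _ => (mul_smul_comm _ _ _).symm
        _ = p.coeff j * ∑ s : Fin r, b.repr (α i ^ (j : ℕ)) s • b s := by
            rw [Finset.mul_sum]
        _ = p.coeff j * α i ^ (j : ℕ) := by rw [b.sum_repr]
    rw [Finset.sum_congr rfl fun j _ => hstep j, ← map_sum]
    have heval : ∑ j : Fin k, p.coeff j * α i ^ (j : ℕ) = p.eval (α i) := by
      rw [Polynomial.eval_eq_sum_range' hdeg]
      exact Fin.sum_univ_eq_sum_range (fun n => p.coeff n * α i ^ n) k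
    rw [heval, Lagrange.eval_interpolate_at_node w hinjOn i.2]
    simp [hw, i.2, Module.Basis.coord_apply, Module.Basis.repr_self]
  exact pmf_map_uniform_of_addHom T hsurj
end
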